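/- Suppose ρ : π → U(n) is a faithful irreducible representation of a non-abelian finite nilpotent group π. Let S be the center of the unitary group U(n) and let G be the subgroup of U(n) generated by ρ(π) and S. Then the group extension S → G → G/S does not split; that is, there is no group homomorphism s : G/S → G with q ∘ s = id, where q : G → G/S is the quotient homomorphism. -/

import Mathlib

open Matrix

/-- The subgroup of a subgroup `G ≤ M` induced by the center of `M` is normal in `G`. -/
instance center_subgroupOf_normal {M : Type*} [Group M] (G : Subgroup M) :
    ((Subgroup.center M).subgroupOf G).Normal :=
  Subgroup.Normal.subgroupOf inferInstance G

/-- A nontrivial nilpotent group has a nontrivial center. -/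
lemma nilpotent_center_nontrivial {G : Type*} [Group G] [Nontrivial G]
    (h : Group.IsNilpotent G) : ∃ z ∈ Subgroup.center G, z ≠ 1 := by
  by_contra hc
  push_neg at hc
  have hcent : Subgroup.center G = ⊥ := by
    rw [eq_bot_iff]
    intro x hx
    simpa using hc x hx
  have hall : ∀ k, Subgroup.upperCentralSeries G k = ⊥ := by
    intro k
    induction k with
    | zero => simp
    | succ k ih =>
      rw [eq_bot_iff]
      intro x hx
      have hx' : x ∈ Subgroup.center G := by
        rw [Subgroup.mem_center_iff]
        intro y
        have := mem_upperCentralSeries_succ_iff.mp hx y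
        rw [ih, Subgroup.mem_bot] at this
        have h1 : (open scoped commutatorElement in ⁅x, y⁆ = 1) := this
        exact (commutatorElement_eq_one_iff_mul_comm.mp h1).symm
      rw [hcent] at hx'
      exact hx'
  obtain ⟨m, hm⟩ := h.nilpotent'
  rw [hall m] at hm
  obtain ⟨a, b, hab⟩ := exists_pair_ne G
  exact hab (by
    have ha : a ∈ (⊥ : Subgroup G) := hm ▸ Subgroup.mem_top a
    have hb : b ∈ (⊥ : Subgroup G) := hm ▸ Subgroup.mem_top b
    rw [Subgroup.mem_bot] at ha hb
    rw [ha, hb])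

/-- Schur's lemma: a matrix commuting with all of an irreducible family is scalar. -/
lemma schur_scalar (n : ℕ) {π : Type*} [Group π]
    (ρ : π →* Matrix.unitaryGroup (Fin n) ℂ)
    (hirr : ∀ W : Submodule ℂ (Fin n → ℂ),
      (∀ g : π, ∀ v ∈ W, Matrix.mulVec ((ρ g : Matrix.unitaryGroup (Fin n) ℂ) :
        Matrix (Fin n) (Fin n) ℂ) v ∈ W) → W = ⊥ ∨ W = ⊤)
    (A : Matrix (Fin n) (Fin n) ℂ)
    (hA : ∀ h : π, ((ρ h : Matrix.unitaryGroup (Fin n) ℂ) :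
      Matrix (Fin n) (Fin n) ℂ) * A = A * ((ρ h : Matrix.unitaryGroup (Fin n) ℂ) :
      Matrix (Fin n) (Fin n) ℂ)) :
    ∃ c : ℂ, A = c • (1 : Matrix (Fin n) (Fin n) ℂ) := by
  rcases Nat.eq_zero_or_pos n with hn | hn
  · subst hn
    exact ⟨0, by ext i j; exact i.elim0⟩
  haveI : NeZero n := ⟨hn.ne'⟩
  haveI : Nontrivial (Fin n → ℂ) := Function.nontrivial
  obtain ⟨μ, hμ⟩ := Module.End.exists_eigenvalue (Matrix.mulVecLin A)
  set E := Module.End.eigenspace (Matrix.mulVecLin A) μ with hE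
  have hEne : E ≠ ⊥ := hμ
  have hinv : ∀ g : π, ∀ v ∈ E, Matrix.mulVec ((ρ g : Matrix.unitaryGroup (Fin n) ℂ) :
      Matrix (Fin n) (Fin n) ℂ) v ∈ E := by
    intro g v hv
    rw [hE, Module.End.mem_eigenspace_iff] at hv ⊢
    rw [Matrix.mulVecLin_apply] at hv ⊢
    rw [Matrix.mulVec_mulVec, ← hA g, ← Matrix.mulVec_mulVec, hv, Matrix.mulVec_smul]
  rcases hirr E hinv with h | h
  · exact absurd h hEne
  have hall : ∀ v : Fin n → ℂ, A.mulVec v = μ • v := by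
    intro v
    have hv : v ∈ E := h ▸ Submodule.mem_top
    rw [hE, Module.End.mem_eigenspace_iff, Matrix.mulVecLin_apply] at hv
    exact hv
  refine ⟨μ, ?_⟩
  ext i j
  have := congrFun (hall (Pi.single j 1)) i
  simp only [Matrix.mulVec_single, mul_one, Pi.smul_apply, MulOpposite.op_one, one_smul, Matrix.col_apply] at this
  rw [this]
  by_cases hij : i = j <;> simp [Matrix.one_apply, hij, Pi.single_apply, smul_eq_mul]

/-- A scalar unitary matrix is in the center of the unitary group. -/
lemma scalar_mem_center (n : ℕ) (A : Matrix.unitaryGroup (Fin n) ℂ) (c : ℂ)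
    (hA : (A : Matrix (Fin n) (Fin n) ℂ) = c • 1) :
    A ∈ Subgroup.center (Matrix.unitaryGroup (Fin n) ℂ) := by
  rw [Subgroup.mem_center_iff]
  intro g
  ext1
  push_cast
  rw [hA, smul_mul_assoc, mul_smul_comm, one_mul, mul_one]

/-- If `ρ : π → U(n)` is a faithful irreducible representation of a
non-abelian finite nilpotent group `π`, `S` is the center of `U(n)` and `G` is the subgroup
of `U(n)` generated by `ρ(π)` and `S`, then the extension `S → G → G/S` does not split:
there is no homomorphism `s : G/S → G` with `q ∘ s = id`. -/
theorem extension_by_center_does_not_split (n : ℕ) (π : Type*) [Group π] [Finite π]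
    (hπ : ∃ a b : π, a * b ≠ b * a)
    (hnil : Group.IsNilpotent π)
    (ρ : π →* Matrix.unitaryGroup (Fin n) ℂ)
    (hfaithful : Function.Injective ρ)
    (hirr : ∀ W : Submodule ℂ (Fin n → ℂ),
      (∀ g : π, ∀ v ∈ W, Matrix.mulVec ((ρ g : Matrix.unitaryGroup (Fin n) ℂ) :
        Matrix (Fin n) (Fin n) ℂ) v ∈ W) → W = ⊥ ∨ W = ⊤)
    (G : Subgroup (Matrix.unitaryGroup (Fin n) ℂ))
    (hG : G = Subgroup.closure (Set.range ρ ∪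
      (Subgroup.center (Matrix.unitaryGroup (Fin n) ℂ) : Set (Matrix.unitaryGroup (Fin n) ℂ)))) :
    ¬ ∃ s : (G ⧸ (Subgroup.center (Matrix.unitaryGroup (Fin n) ℂ)).subgroupOf G) →* G,
      (QuotientGroup.mk' ((Subgroup.center (Matrix.unitaryGroup (Fin n) ℂ)).subgroupOf G)).comp s
        = MonoidHom.id _ := by
  rintro ⟨s, hs⟩
  set N := (Subgroup.center (Matrix.unitaryGroup (Fin n) ℂ)).subgroupOf G with hN
  set Q := QuotientGroup.mk' N with hQ
  have hmem : ∀ h : π, ρ h ∈ G := fun h => hG ▸ Subgroup.subset_closure (Or.inl ⟨h, rfl⟩)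
  set ρ' : π →* G := ρ.codRestrict G hmem with hρ'
  set φ : π →* G ⧸ N := Q.comp ρ' with hφ
  -- φ is surjective
  have hsurj : Function.Surjective φ := by
    have hle : Subgroup.closure (Set.range ρ ∪
        (Subgroup.center (Matrix.unitaryGroup (Fin n) ℂ) :
          Set (Matrix.unitaryGroup (Fin n) ℂ))) ≤ (φ.range.comap Q).map G.subtype := by
      rw [Subgroup.closure_le]
      rintro x (⟨h, rfl⟩ | hx)
      · exact ⟨ρ' h, ⟨h, rfl⟩, rfl⟩
      · refine ⟨⟨x, hG ▸ Subgroup.subset_closure (Or.inr hx)⟩, ?_, rfl⟩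
        have h1 : Q ⟨x, hG ▸ Subgroup.subset_closure (Or.inr hx)⟩ = 1 := by
          rw [hQ, QuotientGroup.mk'_apply, QuotientGroup.eq_one_iff]
          simpa [hN, Subgroup.mem_subgroupOf] using hx
        refine Subgroup.mem_comap.mpr ?_
        rw [h1]
        exact one_mem _
    intro x
    obtain ⟨g, rfl⟩ := QuotientGroup.mk'_surjective N x
    have hg2 : (g : Matrix.unitaryGroup (Fin n) ℂ) ∈ Subgroup.closure (Set.range ρ ∪
        (Subgroup.center (Matrix.unitaryGroup (Fin n) ℂ) :
          Set (Matrix.unitaryGroup (Fin n) ℂ))) := by rw [← hG]; exact g.2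
    obtain ⟨g', hg', he⟩ := hle hg2
    have hgg : g' = g := Subtype.ext he
    rw [← hgg]
    exact hg'
  haveI : Group.IsNilpotent (G ⧸ N) := nilpotent_of_surjective φ hsurj
  haveI : Nontrivial (G ⧸ N) := by
    obtain ⟨a, b, hab⟩ := hπ
    by_cases ha : φ a = 1
    · by_cases hb : φ b = 1
      · exfalso
        have ha' : (ρ a : Matrix.unitaryGroup (Fin n) ℂ) ∈
            Subgroup.center (Matrix.unitaryGroup (Fin n) ℂ) := by
          have := (QuotientGroup.eq_one_iff (ρ' a)).mp ha
          exact Subgroup.mem_subgroupOf.mp this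
        have hcomm : ρ a * ρ b = ρ b * ρ a := (Subgroup.mem_center_iff.mp ha' (ρ b)).symm
        exact hab (hfaithful (by rw [_root_.map_mul, _root_.map_mul, hcomm]))
      · exact ⟨φ b, 1, hb⟩
    · exact ⟨φ a, 1, ha⟩
  -- a nontrivial central element of G / N
  obtain ⟨z, hz, hz1⟩ := nilpotent_center_nontrivial (inferInstance : Group.IsNilpotent (G ⧸ N))
  have hQs : ∀ y : G ⧸ N, Q (s y) = y := fun y => DFunLike.congr_fun hs y
  have hsz : ∀ y : G ⧸ N, s z * s y = s y * s z := fun y => by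
    rw [← _root_.map_mul, ← _root_.map_mul, Subgroup.mem_center_iff.mp hz y]
  -- s z commutes with every ρ' h in G
  have hGcomm : ∀ h : π, s z * ρ' h = ρ' h * s z := by
    intro h
    set k := ρ' h * (s (Q (ρ' h)))⁻¹ with hk
    have hkc : (k : Matrix.unitaryGroup (Fin n) ℂ) ∈
        Subgroup.center (Matrix.unitaryGroup (Fin n) ℂ) := by
      have hQk : Q k = 1 := by
        rw [hk, _root_.map_mul, _root_.map_inv, hQs, mul_inv_cancel]
      have := (QuotientGroup.eq_one_iff (k : G)).mp hQk
      simpa [hN, Subgroup.mem_subgroupOf] using this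
    have hd : ρ' h = k * s (Q (ρ' h)) := by rw [hk, inv_mul_cancel_right]
    have c1 : s z * k = k * s z :=
      Subtype.ext (Subgroup.mem_center_iff.mp hkc ((s z) : Matrix.unitaryGroup (Fin n) ℂ))
    have c2 : s z * s (Q (ρ' h)) = s (Q (ρ' h)) * s z := hsz _
    have key : s z * (k * s (Q (ρ' h))) = k * s (Q (ρ' h)) * s z := by
      rw [← mul_assoc, c1, mul_assoc, c2, mul_assoc]
      rw [hk]
      group
    rw [← hd] at key
    exact key
  -- pass to matrices and apply Schur
  have hMcomm : ∀ h : π, ((ρ h : Matrix.unitaryGroup (Fin n) ℂ) :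
      Matrix (Fin n) (Fin n) ℂ) * (((s z : G) : Matrix.unitaryGroup (Fin n) ℂ) :
      Matrix (Fin n) (Fin n) ℂ) = (((s z : G) : Matrix.unitaryGroup (Fin n) ℂ) :
      Matrix (Fin n) (Fin n) ℂ) * ((ρ h : Matrix.unitaryGroup (Fin n) ℂ) :
      Matrix (Fin n) (Fin n) ℂ) := by
    intro h
    have h1 := congrArg (fun x : G => ((x : Matrix.unitaryGroup (Fin n) ℂ) :
      Matrix (Fin n) (Fin n) ℂ)) (hGcomm h)
    have h2 : (ρ' h : Matrix.unitaryGroup (Fin n) ℂ) = ρ h := rfl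
    simp only [Subgroup.coe_mul] at h1
    push_cast at h1
    rw [h2] at h1
    exact h1.symm
  obtain ⟨c, hc⟩ := schur_scalar n ρ hirr _ hMcomm
  have hcen : ((s z : G) : Matrix.unitaryGroup (Fin n) ℂ) ∈
      Subgroup.center (Matrix.unitaryGroup (Fin n) ℂ) :=
    scalar_mem_center n _ c hc
  have hszN : s z ∈ N := by rw [hN]; exact Subgroup.mem_subgroupOf.mpr hcen
  have : z = 1 := by
    rw [← hQs z, hQ, QuotientGroup.mk'_apply, QuotientGroup.eq_one_iff]
    exact hszN
  exact hz1 this
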